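/- Let a finite capacitated bipartite assignment instance with item weights w : I → ℕ be given, and consider integral flows on the associated three-layer network. Then the maximum of cost(g, f) over all integral flows is attained by an integral flow whose value Σ_{e} g e is maximum among all integral flows. (Theorem 1, flow form: the MCMF network yields the maximum cost, i.e., the worst-case bound on B_i + W_i, when the flow is maximized.) -/
import Mathlib


/-- An integral flow on the three-layer network associated with a capacitated
bipartite assignment instance: `g e` is the flow from the source to effect
node `e` (capacity `cap e`), `f e x` the flow from effect `e` to item `x`
(capacity 1, present only when `Adj x e`), with conservation at effect nodes
and inflow at most 1 at each item node (capacity of the item-to-sink edge). -/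
def IsFlow {ι ε : Type*} [Fintype ι] [Fintype ε]
    (cap : ε → ℕ) (Adj : ι → ε → Prop) (g : ε → ℕ) (f : ε → ι → ℕ) : Prop :=
  (∀ e : ε, g e ≤ cap e) ∧
  (∀ e : ε, ∀ x : ι, f e x ≤ 1) ∧
  (∀ e : ε, ∀ x : ι, ¬ Adj x e → f e x = 0) ∧
  (∀ e : ε, ∑ x : ι, f e x = g e) ∧
  (∀ x : ι, ∑ e : ε, f e x ≤ 1)

private lemma sum_if_point {α : Type*} [Fintype α] [DecidableEq α] (x : α) (a : ℕ) (b : α → ℕ) :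
    (∑ x0 : α, if x0 = x then a else b x0) + b x = (∑ x0 : α, b x0) + a := by
  rw [← Finset.add_sum_erase _ b (Finset.mem_univ x),
      ← Finset.add_sum_erase _ (fun x0 => if x0 = x then a else b x0) (Finset.mem_univ x)]
  rw [if_pos rfl, Finset.sum_congr rfl (fun y hy => if_neg (Finset.ne_of_mem_erase hy))]
  ring

private lemma cost_eq {ι ε : Type*} [Fintype ι] [Fintype ε] (w : ι → ℕ) (F : ε → ι → ℕ) :
    ∑ e : ε, ∑ x : ι, F e x * w x = ∑ x : ι, (∑ e : ε, F e x) * w x := by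
  rw [Finset.sum_comm]
  exact Finset.sum_congr rfl fun x0 _ => (Finset.sum_mul _ _ _).symm

private lemma flow_aug {ι ε : Type*} [Fintype ι] [Fintype ε]
    (cap : ε → ℕ) (Adj : ι → ε → Prop) (w : ι → ℕ) :
    ∀ (n : ℕ) (g : ε → ℕ) (f : ε → ι → ℕ) (g' : ε → ℕ) (f' : ε → ι → ℕ),
    IsFlow cap Adj g f → IsFlow cap Adj g' f' →
    (∑ p : ε × ι, (f' p.1 p.2 - f p.1 p.2)) = n →
    ∃ (G : ε → ℕ) (F : ε → ι → ℕ), IsFlow cap Adj G F ∧ (∑ e : ε, g' e ≤ ∑ e : ε, G e) ∧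
      ∑ e : ε, ∑ x : ι, f e x * w x ≤ ∑ e : ε, ∑ x : ι, F e x * w x := by
  classical
  intro n
  induction n using Nat.strong_induction_on with
  | _ n ih =>
  intro g f g' f' hF hF' hμ
  have hF'c := hF'
  obtain ⟨hcap, hle1, hadj, hcons, hitem⟩ := hF
  obtain ⟨hcap', hle1', hadj', hcons', hitem'⟩ := hF'
  by_cases hv : ∑ e : ε, g' e ≤ ∑ e : ε, g e
  · exact ⟨g, f, ⟨hcap, hle1, hadj, hcons, hitem⟩, hv, le_rfl⟩
  push_neg at hv
  obtain ⟨e, -, he⟩ := Finset.exists_lt_of_sum_lt hv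
  have hsum : (∑ x : ι, f e x) < ∑ x : ι, f' e x := by rw [hcons, hcons']; exact he
  obtain ⟨x, -, hxlt⟩ := Finset.exists_lt_of_sum_lt hsum
  have hf'le := hle1' e x
  have hfex : f e x = 0 := by omega
  have hf'ex : f' e x = 1 := by omega
  have hAdj : Adj x e := by
    by_contra h
    rw [hadj' e x h] at hf'ex
    omega
  have hgecap : g e + 1 ≤ cap e := by
    have := hcap' e
    omega
  -- all other effects send nothing to x in f'
  have hf'0 : ∀ e3 : ε, e3 ≠ e → f' e3 x = 0 := by
    intro e3 hne
    have hs := hitem' x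
    have hp : f' e x + f' e3 x ≤ ∑ e4 : ε, f' e4 x := by
      calc f' e x + f' e3 x = ∑ e4 ∈ ({e, e3} : Finset ε), f' e4 x :=
            (Finset.sum_pair (f := fun e4 => f' e4 x) (Ne.symm hne)).symm
        _ ≤ ∑ e4 : ε, f' e4 x :=
            Finset.sum_le_sum_of_subset (Finset.subset_univ _)
    omega
  set f2 : ε → ι → ℕ :=
    fun e3 x0 => if x0 = x then (if e3 = e then 1 else 0) else f e3 x0 with hf2
  -- column sums of f2
  have hcolx : (∑ e3 : ε, f2 e3 x) = 1 := by
    simp [hf2]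
  have hcol : ∀ x0 : ι, x0 ≠ x → (∑ e3 : ε, f2 e3 x0) = ∑ e3 : ε, f e3 x0 := by
    intro x0 h
    exact Finset.sum_congr rfl fun e3 _ => by simp [hf2, h]
  -- row sums of f2
  have hrow_e : (∑ x0 : ι, f2 e x0) = g e + 1 := by
    have h1 : (∑ x0 : ι, f2 e x0) + f e x = (∑ x0 : ι, f e x0) + 1 := by
      have := sum_if_point x 1 (f e)
      simpa [hf2] using this
    rw [hfex, hcons] at h1
    omega
  have hrow_ne : ∀ e3 : ε, e3 ≠ e → (∑ x0 : ι, f2 e3 x0) + f e3 x = g e3 := by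
    intro e3 hne
    have h1 : (∑ x0 : ι, f2 e3 x0) + f e3 x = (∑ x0 : ι, f e3 x0) + 0 := by
      have := sum_if_point x 0 (f e3)
      simpa [hf2, hne] using this
    rw [hcons] at h1
    omega
  -- the shared parts of IsFlow for f2
  have hle1_2 : ∀ e3 : ε, ∀ x0 : ι, f2 e3 x0 ≤ 1 := by
    intro e3 x0
    simp only [hf2]
    split_ifs <;> first | omega | exact hle1 e3 x0
  have hadj_2 : ∀ e3 : ε, ∀ x0 : ι, ¬ Adj x0 e3 → f2 e3 x0 = 0 := by
    intro e3 x0 hna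
    simp only [hf2]
    by_cases hx0 : x0 = x
    · subst hx0
      by_cases he3 : e3 = e
      · subst he3; exact absurd hAdj hna
      · simp [he3]
    · simp [hx0, hadj e3 x0 hna]
  have hitem_2 : ∀ x0 : ι, ∑ e3 : ε, f2 e3 x0 ≤ 1 := by
    intro x0
    by_cases hx0 : x0 = x
    · subst hx0; rw [hcolx]
    · rw [hcol x0 hx0]; exact hitem x0
  -- existence of a matching g2
  have hstep : ∃ g2 : ε → ℕ, IsFlow cap Adj g2 f2 := by
    by_cases hs : (∑ e3 : ε, f e3 x) = 0
    · -- item x was unmatched: just add the edge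
      have hall0 : ∀ e3 : ε, f e3 x = 0 := by
        intro e3
        exact (Finset.sum_eq_zero_iff.mp hs) e3 (Finset.mem_univ e3)
      refine ⟨fun e3 => if e3 = e then g e + 1 else g e3, ?_, hle1_2, hadj_2, ?_, hitem_2⟩
      · intro e3
        by_cases he3 : e3 = e
        · subst he3; simpa using hgecap
        · simpa [he3] using hcap e3
      · intro e3
        by_cases he3 : e3 = e
        · subst he3; simpa using hrow_e
        · have := hrow_ne e3 he3
          rw [hall0 e3] at this
          simpa [he3] using this
    · -- item x was matched through some e2: reroute
      obtain ⟨e2, -, he2ne0⟩ := Finset.exists_ne_zero_of_sum_ne_zero hs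
      have he2 : f e2 x = 1 := by have := hle1 e2 x; omega
      have he2ne : e2 ≠ e := by
        intro h; rw [h, hfex] at he2; omega
      have hothers : ∀ e3 : ε, e3 ≠ e2 → f e3 x = 0 := by
        intro e3 hne
        have hsle := hitem x
        have hp : f e2 x + f e3 x ≤ ∑ e4 : ε, f e4 x := by
          calc f e2 x + f e3 x = ∑ e4 ∈ ({e2, e3} : Finset ε), f e4 x :=
                (Finset.sum_pair (f := fun e4 => f e4 x) hne.symm).symm
            _ ≤ ∑ e4 : ε, f e4 x :=
                Finset.sum_le_sum_of_subset (Finset.subset_univ _)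
        omega
      have hge2 : 1 ≤ g e2 := by
        have h1 : f e2 x ≤ ∑ x0 : ι, f e2 x0 :=
          Finset.single_le_sum (fun i _ => Nat.zero_le _) (Finset.mem_univ x)
        rw [hcons] at h1; omega
      refine ⟨fun e3 => if e3 = e then g e + 1 else if e3 = e2 then g e2 - 1 else g e3,
        ?_, hle1_2, hadj_2, ?_, hitem_2⟩
      · intro e3
        by_cases he3 : e3 = e
        · subst he3; simpa using hgecap
        · by_cases he3' : e3 = e2
          · subst he3'; have := hcap e3; simp [he3]; omega
          · simpa [he3, he3'] using hcap e3
      · intro e3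
        by_cases he3 : e3 = e
        · subst he3; simpa using hrow_e
        · by_cases he3' : e3 = e2
          · subst he3'
            have h1 := hrow_ne e3 he3
            rw [he2] at h1
            show (∑ x0 : ι, f2 e3 x0) =
              if e3 = e then g e + 1 else if e3 = e3 then g e3 - 1 else g e3
            rw [if_neg he3, if_pos rfl]
            omega
          · have := hrow_ne e3 he3
            rw [hothers e3 he3'] at this
            simpa [he3, he3'] using this
  obtain ⟨g2, hflow2⟩ := hstep
  -- the cost does not decrease
  have hcost : ∑ e3 : ε, ∑ x0 : ι, f e3 x0 * w x0 ≤ ∑ e3 : ε, ∑ x0 : ι, f2 e3 x0 * w x0 := by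
    rw [cost_eq, cost_eq]
    apply Finset.sum_le_sum
    intro x0 _
    by_cases hx0 : x0 = x
    · subst hx0
      rw [hcolx]
      exact Nat.mul_le_mul_right _ (hitem x0)
    · rw [hcol x0 hx0]
  -- the discrepancy measure strictly decreases
  have hμlt : (∑ p : ε × ι, (f' p.1 p.2 - f2 p.1 p.2)) < n := by
    rw [← hμ]
    apply Finset.sum_lt_sum
    · intro p _
      by_cases hpx : p.2 = x
      · by_cases hpe : p.1 = e
        · have h2 : f2 p.1 p.2 = 1 := by simp [hf2, hpx, hpe]
          rw [h2, hpx, hpe, hf'ex, hfex]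
          omega
        · have h0 : f' p.1 p.2 = 0 := by rw [hpx]; exact hf'0 p.1 hpe
          rw [h0]
          omega
      · have h2 : f2 p.1 p.2 = f p.1 p.2 := by simp [hf2, hpx]
        rw [h2]
    · refine ⟨(e, x), Finset.mem_univ _, ?_⟩
      have h2 : f2 e x = 1 := by simp [hf2]
      simp only [h2, hf'ex, hfex]
      omega
  obtain ⟨G, F, hGF, hval, hc⟩ :=
    ih _ hμlt g2 f2 g' f' hflow2 hF'c rfl
  exact ⟨G, F, hGF, hval, le_trans hcost hc⟩

/-- Theorem 1, flow form: the maximum of the cost over all integral flows on the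
three-layer network is attained by an integral flow of maximum value. -/
theorem max_cost_attained_at_max_flow {ι ε : Type*} [Fintype ι] [Fintype ε]
    (cap : ε → ℕ) (Adj : ι → ε → Prop) (w : ι → ℕ) :
    ∃ (g : ε → ℕ) (f : ε → ι → ℕ), IsFlow cap Adj g f ∧
      (∀ (g' : ε → ℕ) (f' : ε → ι → ℕ), IsFlow cap Adj g' f' →
        ∑ e : ε, g' e ≤ ∑ e : ε, g e) ∧
      (∀ (g' : ε → ℕ) (f' : ε → ι → ℕ), IsFlow cap Adj g' f' →
        ∑ e : ε, ∑ x : ι, f' e x * w x ≤ ∑ e : ε, ∑ x : ι, f e x * w x) := by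
  classical
  -- the zero flow
  have hzero : IsFlow cap Adj (fun _ => 0) (fun _ _ => 0) := by
    refine ⟨fun e => Nat.zero_le _, fun e x => Nat.zero_le _, fun e x _ => rfl, ?_, ?_⟩ <;>
      simp
  -- bounds on value and cost
  have hvbound : ∀ (g' : ε → ℕ) (f' : ε → ι → ℕ), IsFlow cap Adj g' f' →
      ∑ e : ε, g' e ≤ ∑ e : ε, cap e := by
    intro g' f' h
    exact Finset.sum_le_sum fun e _ => h.1 e
  have hcbound : ∀ (g' : ε → ℕ) (f' : ε → ι → ℕ), IsFlow cap Adj g' f' →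
      ∑ e : ε, ∑ x : ι, f' e x * w x ≤ ∑ x : ι, w x := by
    intro g' f' h
    rw [cost_eq]
    calc ∑ x : ι, (∑ e : ε, f' e x) * w x ≤ ∑ x : ι, 1 * w x :=
          Finset.sum_le_sum fun x _ => Nat.mul_le_mul_right _ (h.2.2.2.2 x)
      _ = ∑ x : ι, w x := by simp
  -- a value-maximal flow
  set Q : ℕ → Prop := fun m => ∃ (g' : ε → ℕ) (f' : ε → ι → ℕ),
    IsFlow cap Adj g' f' ∧ ∑ e : ε, g' e = m with hQ
  have hQ0 : Q 0 := ⟨_, _, hzero, by simp⟩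
  obtain ⟨gv, fv, hgvflow, hgvval⟩ :=
    Nat.findGreatest_spec (P := Q) (Nat.zero_le (∑ e : ε, cap e)) hQ0
  have hgvmax : ∀ (g' : ε → ℕ) (f' : ε → ι → ℕ), IsFlow cap Adj g' f' →
      ∑ e : ε, g' e ≤ ∑ e : ε, gv e := by
    intro g' f' h
    rw [hgvval]
    exact Nat.le_findGreatest (hvbound g' f' h) ⟨g', f', h, rfl⟩
  -- a cost-maximal flow
  set P : ℕ → Prop := fun m => ∃ (g' : ε → ℕ) (f' : ε → ι → ℕ),
    IsFlow cap Adj g' f' ∧ ∑ e : ε, ∑ x : ι, f' e x * w x = m with hP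
  have hP0 : P 0 := ⟨_, _, hzero, by simp⟩
  obtain ⟨gc, fc, hgcflow, hgccost⟩ :=
    Nat.findGreatest_spec (P := P) (Nat.zero_le (∑ x : ι, w x)) hP0
  have hgcmax : ∀ (g' : ε → ℕ) (f' : ε → ι → ℕ), IsFlow cap Adj g' f' →
      ∑ e : ε, ∑ x : ι, f' e x * w x ≤ ∑ e : ε, ∑ x : ι, fc e x * w x := by
    intro g' f' h
    rw [hgccost]
    exact Nat.le_findGreatest (hcbound g' f' h) ⟨g', f', h, rfl⟩
  -- augment the cost-maximal flow up to maximal value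
  obtain ⟨G, F, hGF, hval, hc⟩ :=
    flow_aug cap Adj w _ gc fc gv fv hgcflow hgvflow rfl
  refine ⟨G, F, hGF, ?_, ?_⟩
  · intro g' f' h
    exact le_trans (hgvmax g' f' h) hval
  · intro g' f' h
    exact le_trans (hgcmax g' f' h) hc
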